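/- Let n ≥ 1, let w : Fin n → Fin n → EReal have all entries in {−1, 0, 1, ⊤}, and let w_c be a canonical graph of w with d_{w_c}(p,q) = d_w(p,q) for all p,q; write d = d_{w_c} and t*(p,q) = halve(d(p,q)). Fix i, j with d(i,j) finite (an integer). If min over k ∈ Fin n of max(t*(i,k), x⁺(k,j)) equals t*(i,j) − 1, or min over k ∈ Fin n of max(t*(i,k), x⁻(k,j)) equals t*(i,j), then d(i,j) = 2·t*(i,j) − 1; otherwise d(i,j) = 2·t*(i,j). -/

import Mathlib

open scoped BigOperators

namespace MinMaxAPSP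

/-- `p` is a walk from `i` to `j` with `ℓ` hops in the graph with weight matrix `w`
(an ordered pair is an edge iff its weight is not `⊤`). -/
def IsWalk {n : ℕ} (w : Fin n → Fin n → EReal) (i j : Fin n) (ℓ : ℕ)
    (p : Fin (ℓ+1) → Fin n) : Prop :=
  p 0 = i ∧ p (Fin.last ℓ) = j ∧ ∀ k : Fin ℓ, w (p k.castSucc) (p k.succ) ≠ ⊤

/-- The weight of a walk with `ℓ` hops. -/
noncomputable def walkWeight {n : ℕ} (w : Fin n → Fin n → EReal) (ℓ : ℕ)
    (p : Fin (ℓ+1) → Fin n) : EReal :=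
  ∑ k : Fin ℓ, w (p k.castSucc) (p k.succ)

/-- The distance from `i` to `j`: the infimum of the weights of all walks from `i` to `j`
(`⊤` if there is no walk). -/
noncomputable def dist {n : ℕ} (w : Fin n → Fin n → EReal) (i j : Fin n) : EReal :=
  sInf {x : EReal | ∃ ℓ, ∃ p : Fin (ℓ+1) → Fin n, IsWalk w i j ℓ p ∧ walkWeight w ℓ p = x}

/-- The infimum of the weights of all walks from `i` to `j` with at most `δ` hops
(`⊤` if there is no such walk). -/
noncomputable def distLE {n : ℕ} (w : Fin n → Fin n → EReal) (δ : ℕ) (i j : Fin n) : EReal :=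
  sInf {x : EReal | ∃ ℓ ≤ δ, ∃ p : Fin (ℓ+1) → Fin n, IsWalk w i j ℓ p ∧ walkWeight w ℓ p = x}

/-- `w` is `δ`-regular. -/
def IsRegular {n : ℕ} (w : Fin n → Fin n → EReal) (δ : ℕ) : Prop :=
  ∀ i j : Fin n,
    (dist w i j ≠ ⊥ → dist w i j = distLE w δ i j) ∧
    (dist w i j = ⊥ →
      ∃ ℓ ≤ δ, ∃ p : Fin (ℓ+1) → Fin n, IsWalk w i j ℓ p ∧ walkWeight w ℓ p < 0)

/-- All entries of `w` are in `{-1, 0, 1, ⊤}`. -/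
def EntriesInMinusOneZeroOneTop {n : ℕ} (w : Fin n → Fin n → EReal) : Prop :=
  ∀ i j, w i j = -1 ∨ w i j = 0 ∨ w i j = 1 ∨ w i j = ⊤

/-- `p` is a shortest walk from `i` to `j` under `w`. -/
def IsShortestWalk {n : ℕ} (w : Fin n → Fin n → EReal) (i j : Fin n) (ℓ : ℕ)
    (p : Fin (ℓ+1) → Fin n) : Prop :=
  IsWalk w i j ℓ p ∧ walkWeight w ℓ p = dist w i j

/-- `wc` is a canonical graph of `w`. -/
def IsCanonical {n : ℕ} (w wc : Fin n → Fin n → EReal) : Prop :=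
  EntriesInMinusOneZeroOneTop wc ∧
  ∀ (i j : Fin n) (ℓ : ℕ) (p : Fin (ℓ+1) → Fin n), IsShortestWalk w i j ℓ p →
    ∃ ℓ' ≤ ℓ, ∃ p' : Fin (ℓ'+1) → Fin n,
      IsShortestWalk wc i j ℓ' p' ∧
      walkWeight wc ℓ' p' = walkWeight w ℓ p ∧
      (ℓ' = 1 ∨ ∀ k : Fin ℓ', wc (p' k.castSucc) (p' k.succ) ≠ 0)

/-- `halve x = ⌈x/2⌉` for finite `x`, and `halve (⊥) = ⊥`, `halve (⊤) = ⊤`. -/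
noncomputable def halve (x : EReal) : EReal :=
  if x = ⊤ then ⊤ else if x = ⊥ then ⊥ else (((⌈x.toReal / 2⌉ : ℤ) : ℝ) : EReal)



variable {n : ℕ}

lemma dist_le_walkWeight {w : Fin n → Fin n → EReal} {i j : Fin n} {ℓ : ℕ}
    {p : Fin (ℓ+1) → Fin n} (h : IsWalk w i j ℓ p) :
    dist w i j ≤ walkWeight w ℓ p := sInf_le ⟨ℓ, p, h, rfl⟩

lemma ereal_finite {x : EReal} (ht : x ≠ ⊤) (hb : x ≠ ⊥) : ∃ r : ℝ, x = (r : EReal) := by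
  induction x using EReal.rec with
  | bot => exact absurd rfl hb
  | top => exact absurd rfl ht
  | coe a => exact ⟨a, rfl⟩

lemma coe_sum (ℓ : ℕ) (f : Fin ℓ → ℝ) : ∑ k, ((f k) : EReal) = (((∑ k, f k) : ℝ) : EReal) := by
  induction ℓ with
  | zero => simp
  | succ m ih =>
      rw [Fin.sum_univ_castSucc (f := f), Fin.sum_univ_castSucc, ih, EReal.coe_add]

lemma walkWeight_int {w : Fin n → Fin n → EReal} (hw : EntriesInMinusOneZeroOneTop w)
    {i j : Fin n} {ℓ : ℕ} {p : Fin (ℓ+1) → Fin n} (h : IsWalk w i j ℓ p) :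
    ∃ m : ℤ, walkWeight w ℓ p = ((m : ℝ) : EReal) := by
  have key : ∀ k : Fin ℓ, ∃ a : ℤ, w (p k.castSucc) (p k.succ) = ((a : ℝ) : EReal) := by
    intro k
    rcases hw (p k.castSucc) (p k.succ) with h1 | h1 | h1 | h1
    · exact ⟨-1, by rw [h1]; norm_num⟩
    · exact ⟨0, by rw [h1]; norm_num⟩
    · exact ⟨1, by rw [h1]; norm_num⟩
    · exact absurd h1 (h.2.2 k)
  choose a ha using key
  refine ⟨∑ k, a k, ?_⟩
  rw [walkWeight, Finset.sum_congr rfl fun k _ => ha k, coe_sum]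
  push_cast
  rfl

private def S (w : Fin n → Fin n → EReal) (i j : Fin n) : Set EReal :=
  {x : EReal | ∃ ℓ, ∃ p : Fin (ℓ+1) → Fin n, IsWalk w i j ℓ p ∧ walkWeight w ℓ p = x}

lemma dist_mem {w : Fin n → Fin n → EReal} (hw : EntriesInMinusOneZeroOneTop w) {i j : Fin n}
    (htop : dist w i j ≠ ⊤) (hbot : dist w i j ≠ ⊥) :
    ∃ ℓ, ∃ p : Fin (ℓ+1) → Fin n, IsShortestWalk w i j ℓ p := by
  have hint : ∀ x ∈ S w i j, ∃ m : ℤ, x = ((m : ℝ) : EReal) := by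
    rintro x ⟨ℓ, p, hp, rfl⟩
    exact walkWeight_int hw hp
  have hmem : dist w i j ∈ S w i j := by
    by_contra hno
    obtain ⟨dR, hdR⟩ := ereal_finite htop hbot
    have h1 : dist w i j < dist w i j + 1 := by
      rw [hdR, show (1:EReal) = ((1:ℝ):EReal) from rfl, ← EReal.coe_add]
      exact_mod_cast (by linarith : dR < dR + 1)
    obtain ⟨s, hs, hslt⟩ := sInf_lt_iff.mp (show sInf (S w i j) < dist w i j + 1 from h1)
    have hles : dist w i j ≤ s := sInf_le hs
    rcases eq_or_lt_of_le hles with heq | hlt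
    · exact hno (heq ▸ hs)
    · obtain ⟨s', hs', hs'lt⟩ := sInf_lt_iff.mp (show sInf (S w i j) < s from hlt)
      obtain ⟨b, rfl⟩ := hint s hs
      obtain ⟨a, rfl⟩ := hint s' hs'
      have hab : a < b := by exact_mod_cast hs'lt
      -- dist ≤ a and b < dist + 1, with a ≤ b - 1 : contradiction
      have hd_le : dist w i j ≤ ((a : ℝ) : EReal) := sInf_le hs'
      -- from hslt : (b:EReal) < dist + 1
      have hba : ((b : ℝ) : EReal) < ((a : ℝ) : EReal) + 1 :=
        lt_of_lt_of_le hslt (add_le_add_left hd_le 1)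
      rw [show (1:EReal) = ((1:ℝ):EReal) from rfl, ← EReal.coe_add] at hba
      have hba2 : (b : ℝ) < (a : ℝ) + 1 := by exact_mod_cast hba
      have : b < a + 1 := by exact_mod_cast hba2
      omega
  obtain ⟨ℓ, p, hp, hweq⟩ := hmem
  exact ⟨ℓ, p, hp, hweq⟩

/-- appending an edge to a walk -/
lemma isWalk_snoc {w : Fin n → Fin n → EReal} {i c j : Fin n} {ℓ : ℕ}
    {p : Fin (ℓ+1) → Fin n} (h : IsWalk w i c ℓ p) (hkj : w c j ≠ ⊤) :
    IsWalk w i j (ℓ+1) (Fin.snoc p j) ∧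
      walkWeight w (ℓ+1) (Fin.snoc p j) = walkWeight w ℓ p + w c j := by
  obtain ⟨h0, hlast, hedge⟩ := h
  have hsc : ∀ m : Fin (ℓ+1), (Fin.snoc p j : Fin (ℓ+2) → Fin n) m.castSucc = p m :=
    fun m => by simp
  have hterm : ∀ m : Fin ℓ,
      w ((Fin.snoc p j : Fin (ℓ+2) → Fin n) (m.castSucc).castSucc)
        ((Fin.snoc p j : Fin (ℓ+2) → Fin n) (m.castSucc).succ)
      = w (p m.castSucc) (p m.succ) := by
    intro m
    rw [hsc, Fin.succ_castSucc, hsc]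
  have hlastterm :
      w ((Fin.snoc p j : Fin (ℓ+2) → Fin n) (Fin.last ℓ).castSucc)
        ((Fin.snoc p j : Fin (ℓ+2) → Fin n) (Fin.last ℓ).succ)
      = w c j := by
    rw [hsc, hlast, Fin.succ_last]
    simp
  refine ⟨⟨?_, ?_, ?_⟩, ?_⟩
  · rw [show (0 : Fin (ℓ+2)) = (0 : Fin (ℓ+1)).castSucc by simp, hsc]; exact h0
  · simp
  · intro k
    induction k using Fin.lastCases with
    | last => rw [hlastterm]; exact hkj
    | cast m => rw [hterm m]; exact hedge m
  · rw [walkWeight, Fin.sum_univ_castSucc]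
    rw [Finset.sum_congr rfl fun m _ => hterm m, hlastterm]
    rfl

/-- the prefix of a walk (dropping the last edge) -/
lemma isWalk_init {w : Fin n → Fin n → EReal} {i j : Fin n} {ℓ : ℕ}
    {p : Fin (ℓ+2) → Fin n} (h : IsWalk w i j (ℓ+1) p) :
    IsWalk w i (p (Fin.last ℓ).castSucc) ℓ (p ∘ Fin.castSucc) ∧
      walkWeight w (ℓ+1) p
        = walkWeight w ℓ (p ∘ Fin.castSucc) + w (p (Fin.last ℓ).castSucc) j := by
  obtain ⟨h0, hlast, hedge⟩ := h
  have hterm : ∀ m : Fin ℓ,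
      w ((p ∘ Fin.castSucc) m.castSucc) ((p ∘ Fin.castSucc) m.succ)
      = w (p (m.castSucc).castSucc) (p (m.castSucc).succ) := by
    intro m
    simp only [Function.comp_apply, Fin.succ_castSucc]
  refine ⟨⟨?_, rfl, ?_⟩, ?_⟩
  · simp only [Function.comp_apply, Fin.castSucc_zero]; exact h0
  · intro m
    rw [hterm m]; exact hedge m.castSucc
  · rw [walkWeight, Fin.sum_univ_castSucc, walkWeight,
      Finset.sum_congr rfl fun m _ => (hterm m).symm, Fin.succ_last, hlast]

lemma sub_le_of_le_add (x : EReal) (D e : ℝ) (h : (D : EReal) ≤ x + (e : EReal)) :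
    ((D - e : ℝ) : EReal) ≤ x := by
  induction x using EReal.rec with
  | bot => simp at h
  | coe a =>
      rw [← EReal.coe_add] at h
      exact_mod_cast (by linarith [(EReal.coe_le_coe_iff.mp h)] : D - e ≤ a)
  | top => simp

/-- lower bound on intermediate distance via an edge into `j` -/
lemma le_dist_of_edge {w : Fin n → Fin n → EReal} {i j c : Fin n} {e : ℝ}
    (hkj : w c j = (e : EReal)) {D : ℝ} (hD : dist w i j = (D : EReal)) :
    ((D - e : ℝ) : EReal) ≤ dist w i c := by
  apply le_sInf
  rintro x ⟨ℓ, p, hp, rfl⟩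
  have hne : w c j ≠ ⊤ := by rw [hkj]; exact EReal.coe_ne_top e
  obtain ⟨hw', hww'⟩ := isWalk_snoc hp hne
  have h1 : (D : EReal) ≤ walkWeight w ℓ p + (e : EReal) := by
    rw [← hD, ← hkj, ← hww']; exact dist_le_walkWeight hw'
  exact sub_le_of_le_add _ _ _ h1

lemma halve_coe (x : ℝ) : halve (x : EReal) = ((⌈x / 2⌉ : ℤ) : ℝ) := by
  rw [halve, if_neg (EReal.coe_ne_top x), if_neg (EReal.coe_ne_bot x), EReal.toReal_coe]

lemma halve_mono : Monotone halve := by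
  intro x y h
  induction y using EReal.rec with
  | top => simp [halve]
  | bot =>
      have : x = ⊥ := le_bot_iff.mp h
      subst this; simp [halve]
  | coe b =>
      induction x using EReal.rec with
      | bot => simp [halve]
      | top => exact absurd h (by simp)
      | coe a =>
          rw [halve_coe, halve_coe]
          have hab : a ≤ b := by exact_mod_cast h
          exact_mod_cast Int.ceil_le_ceil (by linarith : a / 2 ≤ b / 2)

/-- ceil of half of an integer -/
lemma ceil_half_bounds (m : ℤ) : 2 * ⌈(m : ℝ) / 2⌉ - 1 ≤ m ∧ m ≤ 2 * ⌈(m : ℝ) / 2⌉ := by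
  constructor
  · have h := Int.ceil_lt_add_one ((m : ℝ) / 2)
    have : (2 * ⌈(m:ℝ)/2⌉ : ℝ) < (m : ℝ) + 2 := by push_cast at h ⊢; linarith
    have : 2 * ⌈(m:ℝ)/2⌉ < m + 2 := by exact_mod_cast this
    omega
  · have h := Int.le_ceil ((m : ℝ) / 2)
    have : (m : ℝ) ≤ (2 * ⌈(m:ℝ)/2⌉ : ℝ) := by linarith
    exact_mod_cast this

lemma ceil_half_even (t : ℤ) : ⌈((2*t : ℤ) : ℝ) / 2⌉ = t := by
  have := ceil_half_bounds (2*t); omega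

lemma ceil_half_odd (t : ℤ) : ⌈((2*t - 1 : ℤ) : ℝ) / 2⌉ = t := by
  have := ceil_half_bounds (2*t - 1); omega

lemma eq_coe_sub_of_add_eq {x : EReal} {c D : ℝ} (h : x + (c : EReal) = (D : EReal)) :
    x = ((D - c : ℝ) : EReal) := by
  induction x using EReal.rec with
  | bot => simp at h
  | top => simp at h
  | coe a =>
      rw [← EReal.coe_add] at h
      exact_mod_cast (by linarith [(EReal.coe_eq_coe_iff.mp h)] : a = D - c)

/-- recovering the distance from its half and the two products. -/
theorem stmt8 (n : ℕ) (hn : 1 ≤ n) (w wc : Fin n → Fin n → EReal)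
    (hw : EntriesInMinusOneZeroOneTop w)
    (hc : IsCanonical w wc) (hdc : ∀ p q : Fin n, dist wc p q = dist w p q)
    (i j : Fin n) (hfin : dist wc i j ≠ ⊤ ∧ dist wc i j ≠ ⊥) :
    (((⨅ k : Fin n, max (halve (dist wc i k)) (if wc k j = 1 then (⊥ : EReal) else ⊤))
          = halve (dist wc i j) - 1 ∨
      (⨅ k : Fin n, max (halve (dist wc i k)) (if wc k j = -1 then (⊥ : EReal) else ⊤))
          = halve (dist wc i j)) →
        dist wc i j = 2 * halve (dist wc i j) - 1) ∧
    (¬((⨅ k : Fin n, max (halve (dist wc i k)) (if wc k j = 1 then (⊥ : EReal) else ⊤))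
          = halve (dist wc i j) - 1 ∨
      (⨅ k : Fin n, max (halve (dist wc i k)) (if wc k j = -1 then (⊥ : EReal) else ⊤))
          = halve (dist wc i j)) →
        dist wc i j = 2 * halve (dist wc i j)) := by
  obtain ⟨htop, hbot⟩ := hfin
  have hwc : EntriesInMinusOneZeroOneTop wc := hc.1
  haveI : Nonempty (Fin n) := ⟨⟨0, hn⟩⟩
  -- dist wc i j is an integer m
  obtain ⟨ℓ0, p0, hsw0⟩ := dist_mem hwc htop hbot
  obtain ⟨m, hm⟩ : ∃ m : ℤ, dist wc i j = ((m : ℝ) : EReal) := by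
    obtain ⟨mm, hmm⟩ := walkWeight_int hwc hsw0.1
    exact ⟨mm, by rw [← hsw0.2, hmm]⟩
  set t : ℤ := ⌈(m : ℝ) / 2⌉ with ht
  have hhalve : halve (dist wc i j) = ((t : ℝ) : EReal) := by rw [hm, halve_coe]
  -- lower bounds on halve (dist i k) for in-neighbours of j
  have hlb1 : ∀ k : Fin n, wc k j = 1 →
      (((⌈((m : ℝ) - 1) / 2⌉ : ℤ) : ℝ) : EReal) ≤ halve (dist wc i k) := by
    intro k hk
    have h1 := le_dist_of_edge (e := 1) (by rw [hk]; norm_cast) hm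
    have h2 := halve_mono h1
    rwa [halve_coe] at h2
  have hlb2 : ∀ k : Fin n, wc k j = -1 →
      (((⌈((m : ℝ) + 1) / 2⌉ : ℤ) : ℝ) : EReal) ≤ halve (dist wc i k) := by
    intro k hk
    have h1 := le_dist_of_edge (e := -1) (by rw [hk]; norm_num) hm
    have h2 := halve_mono ((by norm_num : ((m : ℝ) - (-1) : ℝ) = ((m:ℝ) + 1 : ℝ)) ▸ h1)
    rwa [halve_coe] at h2
  have hT1 : ((t : ℝ) : EReal) - 1 = (((t - 1 : ℤ) : ℝ) : EReal) := by
    rw [show (1 : EReal) = ((1 : ℝ) : EReal) from rfl, ← EReal.coe_sub]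
    norm_cast
  have hparity : m = 2 * t - 1 ∨ m = 2 * t := by
    have := ceil_half_bounds m
    omega
  rw [hhalve, hm]
  rcases hparity with hodd | heven
  · -- m odd : condition holds and dist = 2t - 1
    have hdist : ((m : ℝ) : EReal) = 2 * ((t : ℝ) : EReal) - 1 := by
      rw [show (2 : EReal) = ((2 : ℝ) : EReal) by norm_cast, hodd]
      push_cast
      ring_nf
    -- witness from a canonical shortest walk
    have hdw : dist w i j = ((m : ℝ) : EReal) := by rw [← hdc, hm]
    obtain ⟨ℓw, pw, hsw⟩ := dist_mem hw (by rw [hdw]; exact EReal.coe_ne_top _)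
      (by rw [hdw]; exact EReal.coe_ne_bot _)
    obtain ⟨ℓ', hle', p', hsw', hweq, hclause⟩ := hc.2 i j ℓw pw hsw
    have hwW : walkWeight wc ℓ' p' = ((m : ℝ) : EReal) := by rw [hsw'.2, hm]
    obtain ⟨ℓ'', rfl⟩ : ∃ ℓ'', ℓ' = ℓ'' + 1 := by
      cases ℓ' with
      | zero =>
          exfalso
          rw [walkWeight] at hwW
          simp only [Finset.univ_eq_empty, Finset.sum_empty] at hwW
          have : (0 : ℝ) = (m : ℝ) := by exact_mod_cast hwW
          have : m = 0 := by exact_mod_cast this.symm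
          omega
      | succ a => exact ⟨a, rfl⟩
    obtain ⟨hq, hWsum⟩ := isWalk_init hsw'.1
    set k₀ : Fin n := p' (Fin.last ℓ'').castSucc with hk₀
    have hlastedge : wc (p' (Fin.last ℓ'').castSucc) (p' (Fin.last ℓ'').succ) = wc k₀ j := by
      rw [Fin.succ_last, hsw'.1.2.1]
    have he_ne_top : wc k₀ j ≠ ⊤ := by
      rw [← hlastedge]
      exact hsw'.1.2.2 (Fin.last ℓ'')
    have hWq : ∀ e : ℝ, wc k₀ j = (e : EReal) →
        walkWeight wc ℓ'' (p' ∘ Fin.castSucc) = (((m : ℝ) - e : ℝ) : EReal) := by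
      intro e he
      apply eq_coe_sub_of_add_eq
      rw [← he, ← hWsum, hwW]
    have hpm : wc k₀ j = -1 ∨ wc k₀ j = 1 := by
      rcases hwc k₀ j with h | h | h | h
      · exact Or.inl h
      · exfalso
        rcases hclause with h1 | hz
        · have hl0 : ℓ'' = 0 := by omega
          subst hl0
          have := hWq 0 (by rw [h]; norm_cast)
          rw [walkWeight] at this
          simp only [Finset.univ_eq_empty, Finset.sum_empty] at this
          have : (0 : ℝ) = (m : ℝ) - 0 := by exact_mod_cast this
          have : m = 0 := by exact_mod_cast (by linarith : (m : ℝ) = 0)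
          omega
        · exact hz (Fin.last ℓ'') (by rw [hlastedge, h])
      · exact Or.inr h
      · exact absurd h he_ne_top
    rcases hpm with hkm | hkp
    · -- last edge -1 : right disjunct, B = t
      have hwit : halve (dist wc i k₀) ≤ (((⌈((m : ℝ) + 1) / 2⌉ : ℤ) : ℝ) : EReal) := by
        have h1 : dist wc i k₀ ≤ (((m : ℝ) + 1 : ℝ) : EReal) := by
          have := dist_le_walkWeight hq
          rw [hWq (-1) (by rw [hkm]; norm_num)] at this
          convert this using 2
          ring
        have h2 := halve_mono h1
        rwa [halve_coe] at h2
      have hceq : ⌈((m : ℝ) + 1) / 2⌉ = t := by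
        have harg : ((m : ℝ) + 1) = ((2 * t : ℤ) : ℝ) := by rw [hodd]; push_cast; ring
        rw [harg, ceil_half_even]
      rw [hceq] at hwit
      have hcond : (⨅ k : Fin n, max (halve (dist wc i k))
          (if wc k j = -1 then (⊥ : EReal) else ⊤)) = ((t : ℝ) : EReal) := by
        apply le_antisymm
        · refine iInf_le_of_le k₀ ?_
          rw [if_pos hkm, max_eq_left bot_le]
          exact hwit
        · apply le_iInf
          intro k
          by_cases hk : wc k j = -1
          · rw [if_pos hk, max_eq_left bot_le]
            have := hlb2 k hk
            have hceq2 : ⌈((m : ℝ) + 1) / 2⌉ = t := hceq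
            rwa [hceq2] at this
          · rw [if_neg hk, max_eq_right le_top]
            exact le_top
      exact ⟨fun _ => hdist, fun hnc => absurd (Or.inr hcond) hnc⟩
    · -- last edge 1 : left disjunct, A = t - 1
      have hwit : halve (dist wc i k₀) ≤ (((⌈((m : ℝ) - 1) / 2⌉ : ℤ) : ℝ) : EReal) := by
        have h1 : dist wc i k₀ ≤ (((m : ℝ) - 1 : ℝ) : EReal) := by
          have := dist_le_walkWeight hq
          rwa [hWq 1 (by rw [hkp]; norm_cast)] at this
        have h2 := halve_mono h1
        rwa [halve_coe] at h2
      have hceq : ⌈((m : ℝ) - 1) / 2⌉ = t - 1 := by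
        have harg : ((m : ℝ) - 1) = ((2 * (t - 1) : ℤ) : ℝ) := by rw [hodd]; push_cast; ring
        rw [harg, ceil_half_even]
      rw [hceq] at hwit
      have hcond : (⨅ k : Fin n, max (halve (dist wc i k))
          (if wc k j = 1 then (⊥ : EReal) else ⊤)) = ((t : ℝ) : EReal) - 1 := by
        rw [hT1]
        apply le_antisymm
        · refine iInf_le_of_le k₀ ?_
          rw [if_pos hkp, max_eq_left bot_le]
          exact hwit
        · apply le_iInf
          intro k
          by_cases hk : wc k j = 1
          · rw [if_pos hk, max_eq_left bot_le]
            have := hlb1 k hk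
            rwa [hceq] at this
          · rw [if_neg hk, max_eq_right le_top]
            exact le_top
      exact ⟨fun _ => hdist, fun hnc => absurd (Or.inl hcond) hnc⟩
  · -- m even : condition fails and dist = 2t
    have hdist : ((m : ℝ) : EReal) = 2 * ((t : ℝ) : EReal) := by
      rw [show (2 : EReal) = ((2 : ℝ) : EReal) by norm_cast, heven, ← EReal.coe_mul]
      norm_cast
    have hncond : ¬((⨅ k : Fin n, max (halve (dist wc i k))
            (if wc k j = 1 then (⊥ : EReal) else ⊤)) = ((t : ℝ) : EReal) - 1 ∨
        (⨅ k : Fin n, max (halve (dist wc i k))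
            (if wc k j = -1 then (⊥ : EReal) else ⊤)) = ((t : ℝ) : EReal)) := by
      rintro (hA | hB)
      · -- A = t - 1 impossible
        obtain ⟨k₀, hk₀min⟩ := Finite.exists_min (β := EReal)
          (fun k : Fin n => max (halve (dist wc i k)) (if wc k j = 1 then (⊥ : EReal) else ⊤))
        have hfk : max (halve (dist wc i k₀)) (if wc k₀ j = 1 then (⊥ : EReal) else ⊤)
            = ((t : ℝ) : EReal) - 1 := by
          rw [← hA]
          exact le_antisymm
            (le_iInf (f := fun k : Fin n => max (halve (dist wc i k))
              (if wc k j = 1 then (⊥ : EReal) else ⊤)) hk₀min)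
            (iInf_le (fun k : Fin n => max (halve (dist wc i k))
              (if wc k j = 1 then (⊥ : EReal) else ⊤)) k₀)
        rw [hT1] at hfk
        have hk1 : wc k₀ j = 1 := by
          by_contra hne
          rw [if_neg hne, max_eq_right le_top] at hfk
          exact (EReal.coe_ne_top _) hfk.symm
        rw [if_pos hk1, max_eq_left bot_le] at hfk
        have hlow := hlb1 k₀ hk1
        have hceq : ⌈((m : ℝ) - 1) / 2⌉ = t := by
          have harg : ((m : ℝ) - 1) = ((2 * t - 1 : ℤ) : ℝ) := by rw [heven]; push_cast; ring
          rw [harg, ceil_half_odd]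
        rw [hceq, hfk] at hlow
        have : (t : ℝ) ≤ ((t - 1 : ℤ) : ℝ) := by exact_mod_cast hlow
        have : t ≤ t - 1 := by exact_mod_cast this
        omega
      · -- B = t impossible
        obtain ⟨k₀, hk₀min⟩ := Finite.exists_min (β := EReal)
          (fun k : Fin n => max (halve (dist wc i k)) (if wc k j = -1 then (⊥ : EReal) else ⊤))
        have hfk : max (halve (dist wc i k₀)) (if wc k₀ j = -1 then (⊥ : EReal) else ⊤)
            = ((t : ℝ) : EReal) := by
          rw [← hB]
          exact le_antisymm
            (le_iInf (f := fun k : Fin n => max (halve (dist wc i k))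
              (if wc k j = -1 then (⊥ : EReal) else ⊤)) hk₀min)
            (iInf_le (fun k : Fin n => max (halve (dist wc i k))
              (if wc k j = -1 then (⊥ : EReal) else ⊤)) k₀)
        have hk1 : wc k₀ j = -1 := by
          by_contra hne
          rw [if_neg hne, max_eq_right le_top] at hfk
          exact (EReal.coe_ne_top _) hfk.symm
        rw [if_pos hk1, max_eq_left bot_le] at hfk
        have hlow := hlb2 k₀ hk1
        have hceq : ⌈((m : ℝ) + 1) / 2⌉ = t + 1 := by
          have harg : ((m : ℝ) + 1) = ((2 * (t + 1) - 1 : ℤ) : ℝ) := by rw [heven]; push_cast; ring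
          rw [harg, ceil_half_odd]
        rw [hceq, hfk] at hlow
        have : ((t + 1 : ℤ) : ℝ) ≤ (t : ℝ) := by exact_mod_cast hlow
        have : t + 1 ≤ t := by exact_mod_cast this
        omega
    exact ⟨fun hcnd => absurd hcnd hncond, fun _ => hdist⟩

end MinMaxAPSP
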